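/- Let d ≥ 2 and let V be the swap operator on H = EuclideanSpace ℂ (Fin d × Fin d), defined by (V v)(i, j) = v(j, i), and set L = 2 • id − V. Then: (i) for all unit vectors a, b ∈ EuclideanSpace ℂ (Fin d), ⟨a⊗b, L (a⊗b)⟩ = 2 − |⟨a, b⟩|²; (ii) the supremum of ⟨a⊗b, L (a⊗b)⟩ over unit vectors a, b equals 2 (i.e., g_max(L) = 2); and (iii) a pair of unit vectors (a, b) attains this supremum if and only if ⟨a, b⟩ = 0. -/

import Mathlib

open scoped ComplexInnerProductSpace

/-- The product vector `a ⊗ b` in the bipartite space, `(a ⊗ b)(i, j) = a i * b j`. -/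
noncomputable def tp {m n : ℕ} (a : EuclideanSpace ℂ (Fin m)) (b : EuclideanSpace ℂ (Fin n)) :
    EuclideanSpace ℂ (Fin m × Fin n) :=
  WithLp.toLp 2 (fun p : Fin m × Fin n => a p.1 * b p.2)

lemma tp_inner {m n : ℕ} (a c : EuclideanSpace ℂ (Fin m)) (b e : EuclideanSpace ℂ (Fin n)) :
    ⟪tp a b, tp c e⟫ = ⟪a, c⟫ * ⟪b, e⟫ := by
  simp only [PiLp.inner_apply, RCLike.inner_apply, tp]
  rw [Fintype.sum_prod_type, Finset.sum_mul_sum]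
  congr 1; ext i; congr 1; ext j; push_cast [map_mul]; ring

lemma swap_inner {d : ℕ} (a b : EuclideanSpace ℂ (Fin d))
    (V : EuclideanSpace ℂ (Fin d × Fin d) →L[ℂ] EuclideanSpace ℂ (Fin d × Fin d))
    (hV : ∀ (v : EuclideanSpace ℂ (Fin d × Fin d)) (p : Fin d × Fin d), V v p = v (p.2, p.1)) :
    ⟪tp a b, V (tp a b)⟫ = ⟪a, b⟫ * ⟪b, a⟫ := by
  simp only [PiLp.inner_apply, RCLike.inner_apply, hV, tp]
  rw [Fintype.sum_prod_type, Finset.sum_mul_sum]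
  congr 1; ext i; congr 1; ext j; push_cast [map_mul]; ring

/-- **Swap-operator example.**  Let `V` be the swap operator on
`EuclideanSpace ℂ (Fin d × Fin d)` and `L = 2•id − V`.  Then (i) for all unit vectors
`a, b`, `⟨a⊗b, L (a⊗b)⟩ = 2 − |⟨a, b⟩|²`; (ii) the supremum of this expectation value
over unit vectors equals `2` (i.e. `g_max(L) = 2`); and (iii) a pair of unit vectors
attains the supremum iff `⟨a, b⟩ = 0`. -/
theorem swap_operator_gmax {d : ℕ} (hd : 2 ≤ d)
    (V : EuclideanSpace ℂ (Fin d × Fin d) →L[ℂ] EuclideanSpace ℂ (Fin d × Fin d))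
    (hV : ∀ (v : EuclideanSpace ℂ (Fin d × Fin d)) (p : Fin d × Fin d), V v p = v (p.2, p.1))
    (L : EuclideanSpace ℂ (Fin d × Fin d) →L[ℂ] EuclideanSpace ℂ (Fin d × Fin d))
    (hL : L = (2 : ℂ) • ContinuousLinearMap.id ℂ (EuclideanSpace ℂ (Fin d × Fin d)) - V) :
    (∀ a b : EuclideanSpace ℂ (Fin d), ‖a‖ = 1 → ‖b‖ = 1 →
      ⟪tp a b, L (tp a b)⟫ = ((2 - ‖⟪a, b⟫‖ ^ 2 : ℝ) : ℂ)) ∧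
    sSup {r : ℝ | ∃ a b : EuclideanSpace ℂ (Fin d),
        ‖a‖ = 1 ∧ ‖b‖ = 1 ∧ r = (⟪tp a b, L (tp a b)⟫).re} = 2 ∧
    (∀ a b : EuclideanSpace ℂ (Fin d), ‖a‖ = 1 → ‖b‖ = 1 →
      ((⟪tp a b, L (tp a b)⟫).re = 2 ↔ ⟪a, b⟫ = 0)) := by
  have key : ∀ a b : EuclideanSpace ℂ (Fin d), ‖a‖ = 1 → ‖b‖ = 1 →
      ⟪tp a b, L (tp a b)⟫ = ((2 - ‖⟪a, b⟫‖ ^ 2 : ℝ) : ℂ) := by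
    intro a b ha hb
    subst hL
    rw [ContinuousLinearMap.sub_apply, ContinuousLinearMap.smul_apply,
      ContinuousLinearMap.id_apply, inner_sub_right, inner_smul_right,
      tp_inner, swap_inner a b V hV]
    have h2 : (⟪b, a⟫ : ℂ) = (starRingEnd ℂ) ⟪a, b⟫ := by rw [← inner_conj_symm]
    rw [h2, Complex.mul_conj']
    rw [inner_self_eq_norm_sq_to_K, inner_self_eq_norm_sq_to_K, ha, hb]
    push_cast
    ring
  refine ⟨key, ?_, ?_⟩
  · -- sSup = 2
    apply le_antisymm
    · apply Real.sSup_le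
      · rintro r ⟨a, b, ha, hb, rfl⟩
        rw [key a b ha hb]
        simp only [Complex.ofReal_re]
        nlinarith [sq_nonneg ‖(⟪a, b⟫ : ℂ)‖]
      · norm_num
    · apply le_csSup
      · refine ⟨2, ?_⟩
        rintro r ⟨a, b, ha, hb, rfl⟩
        rw [key a b ha hb]
        simp only [Complex.ofReal_re]
        nlinarith [sq_nonneg ‖(⟪a, b⟫ : ℂ)‖]
      · refine ⟨EuclideanSpace.single ⟨0, by omega⟩ 1, EuclideanSpace.single ⟨1, by omega⟩ 1,
          by simp, by simp, ?_⟩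
        have horth : ⟪(EuclideanSpace.single ⟨0, by omega⟩ 1 : EuclideanSpace ℂ (Fin d)),
            EuclideanSpace.single ⟨1, by omega⟩ 1⟫ = 0 := by
          rw [EuclideanSpace.inner_single_left]
          simp [EuclideanSpace.single_apply, Fin.ext_iff]
        rw [key _ _ (by simp) (by simp), horth]
        norm_num
  · intro a b ha hb
    rw [key a b ha hb]
    simp only [Complex.ofReal_re]
    constructor
    · intro h
      have : ‖(⟪a, b⟫ : ℂ)‖ = 0 := by nlinarith [sq_nonneg ‖(⟪a, b⟫ : ℂ)‖, norm_nonneg (⟪a, b⟫ : ℂ)]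
      exact norm_eq_zero.mp this
    · intro h; rw [h]; simp
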